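/- arXiv:1711.08705 — 3 statements merged into one kernel-verified Lean document; each statement's English description precedes it below -/
import Mathlib

section
/- Let π be a probability density on (0,∞) satisfying Condition 1 with parameters b ≥ 0, R, u_0 > 0, C', b' > 0, K ≥ 0, u_* ≥ 1, 0 < p < n, and define D(x) = ∫_1^∞ e^{-x²/(2v)} v^{-1/2} π(v−1) dv. Then for all x with |x| ≥ 2(max(u_0, u_*) + 1): D(x) ≥ (1/(2R³C'))·e^{b + b' − |x|(1+b+b'/2)}·|x|^{1/2}·(p/n)^K. -/
open MeasureTheory ProbabilityTheory Filter Set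

noncomputable section

/-- Posterior shrinkage weight `m_x(π)`. -/
def mx (π : ℝ → ℝ) (x : ℝ) : ℝ :=
  (∫ u in Ioi (0:ℝ), u * (1+u) ^ (-(3:ℝ)/2) * Real.exp (x^2/2 * (u/(1+u))) * π u) /
  (∫ u in Ioi (0:ℝ), (1+u) ^ (-(1:ℝ)/2) * Real.exp (x^2/2 * (u/(1+u))) * π u)

/-- `π` is a probability density on `(0,∞)`. -/
def IsDensity (π : ℝ → ℝ) : Prop :=
  Measurable π ∧ (∀ u, 0 ≤ π u) ∧ (∫ u in Ioi (0:ℝ), π u) = 1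

/-- `L` is uniformly regularly varying at infinity with constants `R, u0`. -/
def URV (L : ℝ → ℝ) (R u0 : ℝ) : Prop :=
  0 < R ∧ 0 < u0 ∧
    ∀ a ∈ Icc (1:ℝ) 2, ∀ u, u0 ≤ u → 1/R ≤ L (a*u) / L u ∧ L (a*u) / L u ≤ R

/-- Condition 1 with parameters `b R u0 C' b' K ustar` and `0 < p < n`:
`π(u) = L(u)e^{-bu}` with `L` uniformly regularly varying at infinity, and
`C'·π(u) ≥ (p/n)^K e^{-b'u}` for `u ≥ ustar`. -/
def Cond1 (π L : ℝ → ℝ) (b R u0 C' b' K ustar p n : ℝ) : Prop :=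
  0 ≤ b ∧ 0 < C' ∧ 0 < b' ∧ 0 ≤ K ∧ 1 ≤ ustar ∧
  (∀ u, π u = L u * Real.exp (-b*u)) ∧ URV L R u0 ∧
  (∀ u, ustar ≤ u → (p/n) ^ K * Real.exp (-b'*u) ≤ C' * π u)

/-- Condition 2: `∫_0^1 π ≥ c`. -/
def Cond2 (π : ℝ → ℝ) (c : ℝ) : Prop :=
  c ≤ ∫ u in Ioc (0:ℝ) 1, π u

/-- Condition 3(C), with `ν = √(log(n/p))` and `s = (p/n)ν²`. -/
def Cond3 (π : ℝ → ℝ) (C p n : ℝ) : Prop :=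
  (∫ u in Ioi ((p/n) * Real.sqrt (Real.log (n/p)) ^ 2),
      min u (Real.sqrt (Real.log (n/p)) ^ 3 / Real.sqrt u) * π u) +
    Real.sqrt (Real.log (n/p)) *
      (∫ u in Icc (1:ℝ) (Real.sqrt (Real.log (n/p)) ^ 2), π u / Real.sqrt u)
  ≤ C * ((p/n) * Real.sqrt (Real.log (n/p)) ^ 2)

/-- Standard normal cumulative distribution function `Φ`. -/
def Phi (x : ℝ) : ℝ := ((gaussianReal 0 1) (Iic x)).toReal

/-- The denominator integral `D(x) = ∫_1^∞ e^{-x²/(2v)} v^{-1/2} π(v-1) dv`. -/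
def Dint (π : ℝ → ℝ) (x : ℝ) : ℝ :=
  ∫ v in Ioi (1:ℝ), Real.exp (-x^2/(2*v)) * v ^ (-(1:ℝ)/2) * π (v-1)

set_option maxHeartbeats 2000000 in
/-- lower bound for `D(x)` under Condition 1. -/
theorem stmt10 (π L : ℝ → ℝ) (b R u0 C' b' K ustar p n : ℝ)
    (hπ : IsDensity π) (hp : 0 < p) (hpn : p < n)
    (h1 : Cond1 π L b R u0 C' b' K ustar p n) :
    ∀ x : ℝ, 2 * (max u0 ustar + 1) ≤ |x| →
      (1 / (2 * R^3 * C')) * Real.exp (b + b' - |x| * (1 + b + b'/2)) *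
          |x| ^ ((1:ℝ)/2) * (p/n) ^ K
        ≤ Dint π x := by
  obtain ⟨hmeas, hpos, hint1⟩ := hπ
  obtain ⟨hb, hC', hb', hK, hustar, hπL, ⟨hR, hu0, hURV⟩, hlow⟩ := h1
  have hn : 0 < n := hp.trans hpn
  have hPpos : 0 < (p/n) ^ K := Real.rpow_pos_of_pos (div_pos hp hn) K
  -- L is positive at points ≥ u0
  have hLpos : ∀ w, u0 ≤ w → 0 < L w := by
    intro w hw
    have h := (hURV 1 ⟨le_refl 1, one_le_two⟩ w hw).1
    rw [one_mul] at h
    have hne : L w ≠ 0 := by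
      intro h0
      rw [h0, zero_div] at h
      have : (0:ℝ) < 1/R := by positivity
      linarith
    have hge : 0 ≤ L w := by
      have hπw := hpos w
      rw [hπL w] at hπw
      nlinarith [Real.exp_pos (-b*w)]
    exact lt_of_le_of_ne hge (Ne.symm hne)
  have hR1 : 1 ≤ R := by
    have hL := hLpos u0 le_rfl
    have h := (hURV 1 ⟨le_refl 1, one_le_two⟩ u0 le_rfl).2
    rwa [one_mul, div_self hL.ne'] at h
  -- one doubling step
  have hLstep : ∀ w a, u0 ≤ w → 1 ≤ a → a ≤ 2 → L w ≤ R * L (a*w) := by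
    intro w a hw ha1 ha2
    have h := (hURV a ⟨ha1, ha2⟩ w hw).1
    have hLw := hLpos w hw
    rw [div_le_div_iff₀ hR hLw] at h
    nlinarith
  -- two doubling steps
  have hLgrow : ∀ w u, u0 ≤ w → w ≤ u → u ≤ 4*w → L w ≤ R^2 * L u := by
    intro w u hw hwu hu4
    have hw0 : 0 < w := lt_of_lt_of_le hu0 hw
    by_cases hc : u ≤ 2*w
    · have h := hLstep w (u/w) hw (by rw [le_div_iff₀ hw0]; linarith)
        (by rw [div_le_iff₀ hw0]; linarith)
      rw [div_mul_cancel₀ _ hw0.ne'] at h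
      have hLu := hLpos u (le_trans hw hwu)
      nlinarith [mul_nonneg (mul_nonneg hR.le (by linarith : (0:ℝ) ≤ R - 1)) hLu.le]
    · push_neg at hc
      have h1 := hLstep w 2 hw one_le_two le_rfl
      have hu02 : u0 ≤ 2*w := by linarith
      have h2 := hLstep (2*w) (u/(2*w)) hu02
        (by rw [le_div_iff₀ (by linarith : (0:ℝ) < 2*w)]; linarith)
        (by rw [div_le_iff₀ (by linarith : (0:ℝ) < 2*w)]; linarith)
      rw [div_mul_cancel₀ _ (by linarith : (2:ℝ)*w ≠ 0)] at h2
      have hLu := hLpos u (by linarith)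
      have hL2w := hLpos (2*w) (by linarith)
      nlinarith [mul_le_mul_of_nonneg_left h2 hR.le]
  intro x hx
  set t := |x| with htdef
  have hmax1 : 1 ≤ max u0 ustar := le_trans hustar (le_max_right _ _)
  have ht4 : 4 ≤ t := by linarith
  have ht0 : (0:ℝ) < t := by linarith
  set w : ℝ := t/2 - 1 with hwdef
  have hwu0 : u0 ≤ w := by
    have := le_max_left u0 ustar
    rw [hwdef]; linarith
  have hwus : ustar ≤ w := by
    have := le_max_right u0 ustar
    rw [hwdef]; linarith
  have hw1 : 1 ≤ w := le_trans hustar hwus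
  -- pointwise lower bound for π (v-1) on [t/2, t]
  have hπlow : ∀ v ∈ Icc (t/2) t,
      (p/n)^K * Real.exp (-b'*(t/2-1) - b*(t/2)) / (R^2*C') ≤ π (v-1) := by
    intro v hv
    obtain ⟨hv1, hv2⟩ := hv
    have hu_lb : w ≤ v - 1 := by rw [hwdef]; linarith
    have hu_ub : v - 1 ≤ 4*w := by rw [hwdef]; linarith
    have hLu := hLgrow w (v-1) hwu0 hu_lb hu_ub
    have hLv := hLpos (v-1) (le_trans hwu0 hu_lb)
    have hLw := hLpos w hwu0
    have hlb := hlow w hwus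
    rw [hπL w] at hlb
    rw [hπL (v-1)]
    -- exp algebra
    have e1 : Real.exp (-b*w) * Real.exp (b*w) = 1 := by
      rw [← Real.exp_add]; simp
    have step1 : (p/n)^K * Real.exp (-b'*w) * Real.exp (b*w) ≤ C' * L w := by
      have h := mul_le_mul_of_nonneg_right hlb (Real.exp_pos (b*w)).le
      have heq : C' * (L w * Real.exp (-b*w)) * Real.exp (b*w) = C' * L w := by
        rw [mul_assoc, mul_assoc, e1, mul_one]
      linarith
    have h3 : Real.exp (-b*(t-1)) ≤ Real.exp (-b*(v-1)) := by
      apply Real.exp_le_exp.mpr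
      nlinarith
    have step2 : (p/n)^K * Real.exp (-b'*w) * Real.exp (b*w) * Real.exp (-b*(t-1))
        ≤ C' * (R^2 * L (v-1)) * Real.exp (-b*(v-1)) := by
      calc (p/n)^K * Real.exp (-b'*w) * Real.exp (b*w) * Real.exp (-b*(t-1))
          ≤ (C' * L w) * Real.exp (-b*(t-1)) :=
            mul_le_mul_of_nonneg_right step1 (Real.exp_pos _).le
        _ ≤ (C' * (R^2 * L (v-1))) * Real.exp (-b*(v-1)) := by
            apply mul_le_mul (mul_le_mul_of_nonneg_left hLu hC'.le) h3
              (Real.exp_pos _).le (by positivity)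
    rw [div_le_iff₀ (by positivity : (0:ℝ) < R^2*C')]
    have eexp : Real.exp (-b'*(t/2-1) - b*(t/2))
        = Real.exp (-b'*w) * Real.exp (b*w) * Real.exp (-b*(t-1)) := by
      rw [← Real.exp_add, ← Real.exp_add, hwdef]; congr 1; ring
    rw [eexp]
    ring_nf at step2 ⊢
    linarith
  -- integrability
  have hπInt : IntegrableOn π (Ioi (0:ℝ)) := by
    by_contra h
    rw [MeasureTheory.integral_undef h] at hint1
    norm_num at hint1
  have hshift : IntegrableOn (fun v => π (v-1)) (Ioi (1:ℝ)) := by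
    have h1 : Integrable ((Ioi (0:ℝ)).indicator π) :=
      (integrable_indicator_iff measurableSet_Ioi).mpr hπInt
    have h2 : Integrable (fun v => (Ioi (0:ℝ)).indicator π (v - 1)) := h1.comp_sub_right 1
    have h3 : (Ioi (1:ℝ)).indicator (fun v => π (v-1))
        = fun v => (Ioi (0:ℝ)).indicator π (v - 1) := by
      funext v
      by_cases h : 1 < v
      · rw [indicator_of_mem (mem_Ioi.mpr h), indicator_of_mem (mem_Ioi.mpr (by linarith))]
      · rw [indicator_of_notMem (by simpa using h),
          indicator_of_notMem (by simp only [mem_Ioi, not_lt] at h ⊢; linarith)]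
    rw [← integrable_indicator_iff measurableSet_Ioi, h3]
    exact h2
  set g : ℝ → ℝ := fun v => Real.exp (-x^2/(2*v)) * v ^ (-(1:ℝ)/2) * π (v-1) with hgdef
  have hgmeas : Measurable g := by
    apply Measurable.mul
    · apply Measurable.mul
      · exact (Measurable.div (measurable_const.neg.comp (measurable_id.pow_const 2))
          (measurable_const.mul measurable_id)).exp
      · exact measurable_id.pow_const _
    · exact hmeas.comp (measurable_id.sub measurable_const)
  have hgInt : IntegrableOn g (Ioi (1:ℝ)) := by
    refine Integrable.mono hshift hgmeas.aestronglyMeasurable ?_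
    filter_upwards [ae_restrict_mem measurableSet_Ioi] with v hv
    have hv1 : (1:ℝ) < v := hv
    have h1 : Real.exp (-x^2/(2*v)) ≤ 1 := by
      apply Real.exp_le_one_iff.mpr
      rw [neg_div]
      have : (0:ℝ) ≤ x^2/(2*v) := by positivity
      linarith
    have h2 : v ^ (-(1:ℝ)/2) ≤ 1 :=
      Real.rpow_le_one_of_one_le_of_nonpos hv1.le (by norm_num)
    have h2' : (0:ℝ) ≤ v ^ (-(1:ℝ)/2) := Real.rpow_nonneg (by linarith) _
    rw [Real.norm_eq_abs, Real.norm_eq_abs,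
      abs_of_nonneg (mul_nonneg (mul_nonneg (Real.exp_pos _).le h2') (hpos _)),
      abs_of_nonneg (hpos _)]
    have hEV : Real.exp (-x^2/(2*v)) * v ^ (-(1:ℝ)/2) ≤ 1 :=
      mul_le_one₀ h1 h2' h2
    exact mul_le_of_le_one_left (hpos _) hEV
  have hsub : Icc (t/2) t ⊆ Ioi (1:ℝ) := by
    intro v hv
    simp only [mem_Ioi]
    linarith [hv.1]
  have hnn : 0 ≤ᵐ[volume.restrict (Ioi (1:ℝ))] g := by
    filter_upwards [ae_restrict_mem measurableSet_Ioi] with v hv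
    have hv0 : (0:ℝ) < v := by have := mem_Ioi.mp hv; linarith
    exact mul_nonneg (mul_nonneg (Real.exp_pos _).le (Real.rpow_nonneg hv0.le _)) (hpos _)
  have hmono := setIntegral_mono_set hgInt hnn (HasSubset.Subset.eventuallyLE hsub)
  -- pointwise constant lower bound on [t/2, t]
  set c : ℝ := Real.exp (-t) * t ^ (-(1:ℝ)/2) *
    ((p/n)^K * Real.exp (-b'*(t/2-1) - b*(t/2)) / (R^2*C')) with hcdef
  have hptwise : ∀ v ∈ Icc (t/2) t, c ≤ g v := by
    intro v hv
    obtain ⟨hv1, hv2⟩ := hv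
    have hv0 : (0:ℝ) < v := by linarith
    have e1 : Real.exp (-t) ≤ Real.exp (-x^2/(2*v)) := by
      apply Real.exp_le_exp.mpr
      have hx2 : x^2 = t^2 := (sq_abs x).symm
      rw [hx2, neg_div]
      apply neg_le_neg
      rw [div_le_iff₀ (by linarith : (0:ℝ) < 2*v)]
      nlinarith
    have e2 : t ^ (-(1:ℝ)/2) ≤ v ^ (-(1:ℝ)/2) :=
      Real.rpow_le_rpow_of_nonpos hv0 hv2 (by norm_num)
    have e3 := hπlow v ⟨hv1, hv2⟩
    have hlbnn : (0:ℝ) ≤ (p/n)^K * Real.exp (-b'*(t/2-1) - b*(t/2)) / (R^2*C') := by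
      positivity
    have hev : (0:ℝ) ≤ Real.exp (-x^2/(2*v)) * v ^ (-(1:ℝ)/2) :=
      mul_nonneg (Real.exp_pos _).le (Real.rpow_nonneg hv0.le _)
    calc c ≤ (Real.exp (-x^2/(2*v)) * v ^ (-(1:ℝ)/2)) *
          ((p/n)^K * Real.exp (-b'*(t/2-1) - b*(t/2)) / (R^2*C')) := by
          apply mul_le_mul _ le_rfl hlbnn hev
          exact mul_le_mul e1 e2 (Real.rpow_nonneg ht0.le _) (Real.exp_pos _).le
      _ ≤ g v := by
          rw [hgdef]
          exact mul_le_mul_of_nonneg_left e3 hev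
  have hconst := setIntegral_ge_of_const_le measurableSet_Icc
    (by exact (measure_Icc_lt_top).ne) hptwise (hgInt.mono_set hsub)
  have hvol : (volume (Icc (t/2) t)).toReal = t/2 := by
    rw [Real.volume_Icc, ENNReal.toReal_ofReal (by linarith)]
    ring
  rw [measureReal_def, hvol, smul_eq_mul, mul_comm] at hconst
  -- final arithmetic
  have hhalf : t ^ (-(1:ℝ)/2) * t = t ^ ((1:ℝ)/2) := by
    calc t ^ (-(1:ℝ)/2) * t = t ^ (-(1:ℝ)/2) * t ^ (1:ℝ) := by rw [Real.rpow_one]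
      _ = t ^ ((-(1:ℝ)/2) + 1) := (Real.rpow_add ht0 _ _).symm
      _ = t ^ ((1:ℝ)/2) := by norm_num
  have hE : Real.exp (b + b' - t*(1 + b + b'/2))
      ≤ Real.exp (-t + (-b'*(t/2-1) - b*(t/2))) := by
    apply Real.exp_le_exp.mpr
    nlinarith [mul_nonneg hb (by linarith : (0:ℝ) ≤ t/2 - 1)]
  have hRR : 1/(2*R^3*C') ≤ 1/(2*R^2*C') := by
    apply one_div_le_one_div_of_le (by positivity)
    nlinarith [mul_nonneg (mul_nonneg hC'.le (sq_nonneg R)) (by linarith : (0:ℝ) ≤ R - 1)]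
  have hfinal : (1 / (2 * R^3 * C')) * Real.exp (b + b' - t * (1 + b + b'/2)) *
      t ^ ((1:ℝ)/2) * (p/n) ^ K ≤ c * (t/2) := by
    have h1 : (1 / (2 * R^3 * C')) * Real.exp (b + b' - t * (1 + b + b'/2)) *
        t ^ ((1:ℝ)/2) * (p/n) ^ K
        ≤ (1 / (2 * R^2 * C')) * Real.exp (-t + (-b'*(t/2-1) - b*(t/2))) *
        t ^ ((1:ℝ)/2) * (p/n) ^ K := by
      apply mul_le_mul_of_nonneg_right _ hPpos.le
      apply mul_le_mul_of_nonneg_right _ (Real.rpow_nonneg ht0.le _)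
      apply mul_le_mul hRR hE (Real.exp_pos _).le (by positivity)
    have h2 : (1 / (2 * R^2 * C')) * Real.exp (-t + (-b'*(t/2-1) - b*(t/2))) *
        t ^ ((1:ℝ)/2) * (p/n) ^ K = c * (t/2) := by
      rw [hcdef, Real.exp_add, ← hhalf]
      ring
    linarith
  have hD : Dint π x = ∫ v in Ioi (1:ℝ), g v := by
    unfold Dint
    rw [hgdef]
  calc (1 / (2 * R^3 * C')) * Real.exp (b + b' - t * (1 + b + b'/2)) *
      t ^ ((1:ℝ)/2) * (p/n) ^ K
      ≤ c * (t/2) := hfinal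
    _ ≤ ∫ v in Icc (t/2) t, g v := hconst
    _ ≤ ∫ v in Ioi (1:ℝ), g v := hmono
    _ = Dint π x := hD.symm

end
end

section
/- Let π be a probability density on (0,∞), α ∈ (0,1), and T > 0 such that m_x(π) ≥ α whenever |x| ≥ T. Let θ ∈ ℝⁿ have support S_0 = {i : θ_i ≠ 0} with |S_0| = p ≥ 1, and let X_i ∼ N(θ_i, 1) be independent. Then the false nondiscovery proportion satisfies (1/p)·E[#{i ∈ S_0 : m_{X_i}(π) < α}] ≤ Φ(T − min_{i∈S_0}|θ_i|). -/
open MeasureTheory ProbabilityTheory Filter Set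

noncomputable section

lemma gauss_Iic (θ T : ℝ) : (gaussianReal θ 1) (Iic T) = (gaussianReal 0 1) (Iic (T - θ)) := by
  have h := gaussianReal_map_add_const (μ := 0) (v := 1) θ
  rw [zero_add] at h
  rw [← h, Measure.map_apply (measurable_add_const θ) measurableSet_Iic,
    preimage_add_const_Iic]

lemma gauss_neg (θ : ℝ) : (gaussianReal θ 1).map (fun y => -y) = gaussianReal (-θ) 1 := by
  have h := gaussianReal_map_const_mul (μ := θ) (v := 1) (-1)
  have h2 : (⟨(-1:ℝ)^2, sq_nonneg _⟩ : NNReal) * 1 = 1 := by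
    ext; norm_num
  simp only [h2, neg_one_mul] at h
  convert h using 2
  ext; simp

lemma phi_mono : Monotone Phi := by
  intro a b hab
  exact ENNReal.toReal_mono (measure_ne_top (gaussianReal 0 1) _) (measure_mono (Iic_subset_Iic.2 hab))

lemma gauss_abs_lt (θ T : ℝ) :
    ((gaussianReal θ 1) {y : ℝ | |y| < T}).toReal ≤ Phi (T - |θ|) := by
  rcases le_or_gt 0 θ with hθ | hθ
  · rw [abs_of_nonneg hθ]
    have hsub : {y : ℝ | |y| < T} ⊆ Iic T := by
      intro y hy; exact mem_Iic.2 (le_of_lt (lt_of_abs_lt hy))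
    have := ENNReal.toReal_mono (measure_ne_top (gaussianReal θ 1) _) (measure_mono hsub)
    calc ((gaussianReal θ 1) {y : ℝ | |y| < T}).toReal
        ≤ ((gaussianReal θ 1) (Iic T)).toReal := this
      _ = Phi (T - θ) := by rw [gauss_Iic]; rfl
  · rw [abs_of_neg hθ, sub_neg_eq_add]
    have hsub : {y : ℝ | |y| < T} ⊆ (fun y => -y) ⁻¹' Iic T := by
      intro y hy
      simp only [mem_preimage, mem_Iic]
      have hy' : |y| < T := hy
      have := neg_lt_of_abs_lt hy'
      linarith
    have hmap : (gaussianReal θ 1) ((fun y => -y) ⁻¹' Iic T)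
        = (gaussianReal (-θ) 1) (Iic T) := by
      rw [← gauss_neg θ, Measure.map_apply measurable_neg measurableSet_Iic]
    have := ENNReal.toReal_mono (measure_ne_top (gaussianReal θ 1) _) (measure_mono hsub)
    calc ((gaussianReal θ 1) {y : ℝ | |y| < T}).toReal
        ≤ ((gaussianReal θ 1) ((fun y => -y) ⁻¹' Iic T)).toReal := this
      _ = Phi (T + θ) := by rw [hmap, gauss_Iic, sub_neg_eq_add]; rfl

/-- false nondiscovery proportion bound:
`(1/p)·E[#{i ∈ S₀ : m_{Xᵢ}(π) < α}] ≤ Φ(T − min_{i∈S₀}|θᵢ|)`. -/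
theorem stmt15 (π : ℝ → ℝ) (hπ : IsDensity π)
    (α : ℝ) (hα : α ∈ Ioo (0:ℝ) 1) (T : ℝ) (hT : 0 < T)
    (hthr : ∀ x : ℝ, T ≤ |x| → α ≤ mx π x)
    (n : ℕ) (θ : Fin n → ℝ) (p : ℕ) (hp : 1 ≤ p)
    (hcard : (Finset.univ.filter (fun i => θ i ≠ 0)).card = p) :
    (1 / (p : ℝ)) *
        (∫ x : Fin n → ℝ,
          ((Finset.univ.filter (fun i => θ i ≠ 0 ∧ mx π (x i) < α)).card : ℝ)
          ∂ Measure.pi (fun i => gaussianReal (θ i) 1))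
      ≤ Phi (T - sInf ((fun i => |θ i|) '' {i : Fin n | θ i ≠ 0})) := by
  set μ := Measure.pi (fun i : Fin n => gaussianReal (θ i) 1) with hμdef
  set m := sInf ((fun i => |θ i|) '' {i : Fin n | θ i ≠ 0}) with hmdef
  set S0 := Finset.univ.filter (fun i => θ i ≠ 0) with hS0
  have hm_le : ∀ i ∈ S0, m ≤ |θ i| := by
    intro i hi
    apply csInf_le
    · refine ⟨0, fun y hy => ?_⟩
      rcases hy with ⟨j, _, rfl⟩; exact abs_nonneg _
    · exact ⟨i, (Finset.mem_filter.1 hi).2, rfl⟩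
  set s : Fin n → Set (Fin n → ℝ) := fun i => {x | |x i| < T} with hsdef
  have hsm : ∀ i, MeasurableSet (s i) :=
    fun i => measurableSet_lt ((measurable_pi_apply i).abs) measurable_const
  have hμs : ∀ i, μ (s i) = (gaussianReal (θ i) 1) {y : ℝ | |y| < T} := by
    intro i
    have he : s i = Function.eval i ⁻¹' {y : ℝ | |y| < T} := rfl
    rw [he, Set.eval_preimage, Measure.pi_pi]
    rw [Finset.prod_eq_single i]
    · simp
    · intro j _ hj
      rw [Function.update_of_ne hj]
      exact measure_univ
    · simp
  have hint : ∀ i, Integrable ((s i).indicator (fun _ => (1:ℝ))) μ :=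
    fun i => (integrable_const 1).indicator (hsm i)
  have hg_int : Integrable (fun x => ∑ i ∈ S0, (s i).indicator (fun _ => (1:ℝ)) x) μ :=
    integrable_finset_sum _ (fun i _ => hint i)
  have hfg : ∀ x : Fin n → ℝ,
      ((Finset.univ.filter (fun i => θ i ≠ 0 ∧ mx π (x i) < α)).card : ℝ)
      ≤ ∑ i ∈ S0, (s i).indicator (fun _ => (1:ℝ)) x := by
    intro x
    have h1 : (Finset.univ.filter (fun i => θ i ≠ 0 ∧ mx π (x i) < α))
        ⊆ Finset.univ.filter (fun i => θ i ≠ 0 ∧ |x i| < T) := by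
      refine Finset.monotone_filter_right _ ?_
      intro i _ hi
      refine ⟨hi.1, ?_⟩
      by_contra h
      exact absurd (hthr _ (le_of_not_gt h)) (not_le.2 hi.2)
    calc ((Finset.univ.filter (fun i => θ i ≠ 0 ∧ mx π (x i) < α)).card : ℝ)
        ≤ ((Finset.univ.filter (fun i => θ i ≠ 0 ∧ |x i| < T)).card : ℝ) :=
          Nat.cast_le.2 (Finset.card_le_card h1)
      _ = ∑ i ∈ S0, (s i).indicator (fun _ => (1:ℝ)) x := by
          rw [← Finset.filter_filter, Finset.card_filter]
          push_cast
          refine Finset.sum_congr rfl fun i hi => ?_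
          by_cases hx : |x i| < T
          · simp [Set.indicator_apply, s, hx]
          · simp [Set.indicator_apply, s, hx]
  have key : (∫ x, ((Finset.univ.filter (fun i => θ i ≠ 0 ∧ mx π (x i) < α)).card : ℝ) ∂μ)
      ≤ ∑ i ∈ S0, (μ (s i)).toReal := by
    calc (∫ x, ((Finset.univ.filter (fun i => θ i ≠ 0 ∧ mx π (x i) < α)).card : ℝ) ∂μ)
        ≤ ∫ x, ∑ i ∈ S0, (s i).indicator (fun _ => (1:ℝ)) x ∂μ :=
          integral_mono_of_nonneg (ae_of_all _ fun x => Nat.cast_nonneg _) hg_int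
            (ae_of_all _ hfg)
      _ = ∑ i ∈ S0, ∫ x, (s i).indicator (fun _ => (1:ℝ)) x ∂μ :=
          integral_finset_sum _ (fun i _ => hint i)
      _ = ∑ i ∈ S0, (μ (s i)).toReal := by
          refine Finset.sum_congr rfl fun i _ => ?_
          rw [integral_indicator_const (1:ℝ) (hsm i), smul_eq_mul, mul_one, measureReal_def]
  have key2 : ∑ i ∈ S0, (μ (s i)).toReal ≤ (p : ℝ) * Phi (T - m) := by
    calc ∑ i ∈ S0, (μ (s i)).toReal ≤ ∑ _i ∈ S0, Phi (T - m) := by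
          refine Finset.sum_le_sum fun i hi => ?_
          rw [hμs i]
          exact le_trans (gauss_abs_lt (θ i) T) (phi_mono (by linarith [hm_le i hi]))
      _ = (p : ℝ) * Phi (T - m) := by
          rw [Finset.sum_const, hcard, nsmul_eq_mul]
  have hp' : (0:ℝ) < p := by exact_mod_cast hp
  have := le_trans key key2
  calc (1 / (p:ℝ)) * (∫ x, ((Finset.univ.filter (fun i => θ i ≠ 0 ∧ mx π (x i) < α)).card : ℝ) ∂μ)
      ≤ (1 / (p:ℝ)) * ((p:ℝ) * Phi (T - m)) :=
        mul_le_mul_of_nonneg_left this (by positivity)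
    _ = Phi (T - m) := by field_simp


end
end

section
/- Let π be a probability density on (0,∞) of the form π(u) = L(u)e^{−bu} with b ≥ 0 and L uniformly regularly varying at infinity with constants R, u_0, and fix α ∈ (0,1). Define D(x) = ∫_1^∞ e^{−x²/(2v)} v^{−1/2} π(v−1) dv. Then there exist constants c_0 > 0 and x_0 > 0, depending only on R, b, u_0 and α, such that for all x with |x| ≥ x_0: (∫_{u_0+1}^{(u_0+1)/(1−α)} e^{−x²/(2v)} v^{−3/2} π(v−1) dv)/D(x) ≤ c_0·e^{−x²(1−α)/(2(u_0+1)) + |x|(b+1)}·|x|^{3log₂(R) − 1/2}. -/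
open MeasureTheory ProbabilityTheory Filter Set

noncomputable section

lemma self_le_exp_half {x : ℝ} (hx : 0 ≤ x) : x ≤ Real.exp (x/2) := by
  have h := Real.add_one_le_exp (x/4)
  have h2 : Real.exp (x/2) = Real.exp (x/4) * Real.exp (x/4) := by
    rw [← Real.exp_add]; ring_nf
  nlinarith [sq_nonneg (x - 4), Real.exp_pos (x/4)]

lemma rpow_logb_comm {a c : ℝ} (ha : 0 < a) (hc : 0 < c) (b : ℝ) :
    a ^ Real.logb b c = c ^ Real.logb b a := by
  rw [Real.rpow_def_of_pos ha, Real.rpow_def_of_pos hc, Real.logb, Real.logb]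
  ring_nf

lemma two_pow_ceil_ge {t : ℝ} : (2:ℝ) ^ t ≤ (2:ℝ) ^ (⌈t⌉₊ : ℕ) := by
  rw [← Real.rpow_natCast]
  exact Real.rpow_le_rpow_of_exponent_le one_le_two (Nat.le_ceil t)

lemma urv_iter {L : ℝ → ℝ} {R u0 : ℝ}
    (hL : ∀ u, 0 < u → 0 < L u) (hR : 0 < R) (hu0 : 0 < u0)
    (hab : ∀ a ∈ Icc (1:ℝ) 2, ∀ u, u0 ≤ u → 1/R ≤ L (a*u) / L u ∧ L (a*u) / L u ≤ R)
    (hR1 : 1 ≤ R) :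
    ∀ k : ℕ, ∀ w, u0 ≤ w → w ≤ 2^k * u0 → L u0 / R^k ≤ L w ∧ L w ≤ R^k * L u0 := by
  intro k
  induction k with
  | zero =>
    intro w h1 h2
    have : w = u0 := le_antisymm (by simpa using h2) h1
    simp [this]
  | succ k ih =>
    intro w h1 h2
    have hLu0 := hL u0 hu0
    have hRk : (0:ℝ) < R^k := pow_pos hR k
    have hRk1 : (0:ℝ) < R^(k+1) := pow_pos hR (k+1)
    by_cases hc : w ≤ 2^k * u0
    · obtain ⟨hlo, hhi⟩ := ih w h1 hc
      constructor
      · rw [div_le_iff₀ hRk1]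
        rw [div_le_iff₀ hRk] at hlo
        calc L u0 ≤ L w * R^k := hlo
          _ ≤ L w * R^(k+1) := by
              have hLw : 0 < L w := hL w (lt_of_lt_of_le hu0 h1)
              have : R^k ≤ R^(k+1) := pow_le_pow_right₀ hR1 (by omega)
              nlinarith
      · calc L w ≤ R^k * L u0 := hhi
          _ ≤ R^(k+1) * L u0 := by
              have : R^k ≤ R^(k+1) := pow_le_pow_right₀ hR1 (by omega)
              nlinarith
    · push_neg at hc
      set u : ℝ := 2^k * u0 with hu
      have hu_pos : 0 < u := by positivity
      have huu0 : u0 ≤ u := by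
        have h1k : (1:ℝ) ≤ 2^k := one_le_pow₀ one_le_two
        nlinarith
      have ha1 : 1 ≤ w / u := by rw [le_div_iff₀ hu_pos]; linarith
      have ha2 : w / u ≤ 2 := by
        rw [div_le_iff₀ hu_pos]
        calc w ≤ 2^(k+1) * u0 := h2
          _ = 2 * u := by rw [hu]; ring
      have haw : w / u * u = w := div_mul_cancel₀ w hu_pos.ne'
      obtain ⟨hlo, hhi⟩ := hab (w/u) ⟨ha1, ha2⟩ u huu0
      rw [haw] at hlo hhi
      have hLu : 0 < L u := hL u hu_pos
      have hLw : 0 < L w := hL w (lt_of_lt_of_le hu0 h1)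
      obtain ⟨hlo', hhi'⟩ := ih u huu0 le_rfl
      have e1 : L u ≤ L w * R := by
        rw [div_le_div_iff₀ hR hLu] at hlo; nlinarith
      have e2 : L w ≤ R * L u := by
        rw [div_le_iff₀ hLu] at hhi; nlinarith
      constructor
      · rw [div_le_iff₀ hRk1]
        rw [div_le_iff₀ hRk] at hlo'
        calc L u0 ≤ L u * R^k := hlo'
          _ ≤ (L w * R) * R^k := by nlinarith
          _ = L w * R^(k+1) := by ring
      · calc L w ≤ R * L u := e2
          _ ≤ R * (R^k * L u0) := by nlinarith
          _ = R^(k+1) * L u0 := by ring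

set_option maxHeartbeats 2000000 in
/-- bound on the middle part of the numerator integral relative to `D(x)`,
with constants depending only on `R, b, u0, α`. -/
theorem stmt19 (R b u0 α : ℝ) (hb : 0 ≤ b) (hα : α ∈ Ioo (0:ℝ) 1) :
    ∃ c0 > (0:ℝ), ∃ x0 > (0:ℝ), ∀ (π L : ℝ → ℝ),
      IsDensity π →
      (∀ u, π u = L u * Real.exp (-b*u)) →
      (∀ u, 0 < u → 0 < L u) →
      URV L R u0 →
      ∀ x : ℝ, x0 ≤ |x| →
        (∫ v in Ioo (u0+1) ((u0+1)/(1-α)),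
            Real.exp (-x^2/(2*v)) * v ^ (-(3:ℝ)/2) * π (v-1)) / Dint π x
          ≤ c0 * Real.exp (-x^2 * (1-α) / (2*(u0+1)) + |x| * (b+1)) *
              |x| ^ (3 * Real.logb 2 R - 1/2) := by
  obtain ⟨hα0, hα1⟩ := hα
  have h1α : (0:ℝ) < 1 - α := by linarith
  set M : ℝ := (u0+1)/(1-α) with hM
  set β : ℝ := Real.logb 2 R with hβdef
  set k' : ℕ := ⌈Real.logb 2 ((M-1)/u0)⌉₊ with hk'
  set c0 : ℝ := max 1 ((M - (u0+1)) * R^k' * R * (u0 ^ β)⁻¹ * 2^((1:ℝ)/2)) with hc0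
  set x0 : ℝ := max (u0+2) 2 with hx0
  have hc0pos : (0:ℝ) < c0 := lt_of_lt_of_le one_pos (le_max_left _ _)
  refine ⟨c0, hc0pos, x0, lt_of_lt_of_le two_pos (le_max_right _ _), ?_⟩
  intro π L hdens hπL hLpos hURV x hx
  obtain ⟨hπm, hπ0, hπ1⟩ := hdens
  obtain ⟨hR, hu0, hab⟩ := hURV
  have hLu0 : 0 < L u0 := hLpos u0 hu0
  have hR1 : 1 ≤ R := by
    have h := (hab 1 ⟨le_refl 1, one_le_two⟩ u0 le_rfl).2
    rwa [one_mul, div_self hLu0.ne'] at h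
  have hβ : 0 ≤ β := Real.logb_nonneg one_lt_two hR1
  set X : ℝ := |x| with hXdef
  have hX2 : 2 ≤ X := le_trans (le_max_right _ _) hx
  have hXu : u0 + 2 ≤ X := le_trans (le_max_left _ _) hx
  have hXpos : (0:ℝ) < X := by linarith
  have hx2 : x^2 = X^2 := (sq_abs x).symm
  have hu1 : (0:ℝ) < u0 + 1 := by linarith
  have hMgt : u0 + 1 < M := by
    rw [hM, lt_div_iff₀ h1α]; nlinarith
  have hm_pos : 0 < M - (u0+1) := by linarith
  have h2k' : M - 1 ≤ 2^k' * u0 := by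
    have ht : (2:ℝ) ^ Real.logb 2 ((M-1)/u0) = (M-1)/u0 :=
      Real.rpow_logb two_pos (by norm_num) (div_pos (by linarith) hu0)
    have h := two_pow_ceil_ge (t := Real.logb 2 ((M-1)/u0))
    rw [ht] at h
    rw [hk']
    exact (div_le_iff₀ hu0).mp h
  set E : ℝ := Real.exp (-x^2 * (1-α) / (2*(u0+1))) with hE
  set CN : ℝ := E * (R^k' * L u0) with hCN
  have hEpos : 0 < E := Real.exp_pos _
  -- numerator bound
  have hnum : (∫ v in Ioo (u0+1) M, Real.exp (-x^2/(2*v)) * v ^ (-(3:ℝ)/2) * π (v-1))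
      ≤ CN * (M - (u0+1)) := by
    have hfb : ∀ᵐ v ∂(volume : Measure ℝ), v ∈ Ioo (u0+1) M →
        ‖Real.exp (-x^2/(2*v)) * v ^ (-(3:ℝ)/2) * π (v-1)‖ ≤ CN := by
      refine Eventually.of_forall (fun v hv => ?_)
      obtain ⟨hv1, hv2⟩ := hv
      have hv0 : (0:ℝ) < v := by linarith
      have hL1 : (1:ℝ) ≤ v := by linarith
      have hπnn := hπ0 (v-1)
      have h0 : 0 ≤ Real.exp (-x^2/(2*v)) * v ^ (-(3:ℝ)/2) * π (v-1) :=
        mul_nonneg (mul_nonneg (Real.exp_pos _).le (Real.rpow_nonneg hv0.le _)) hπnn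
      rw [Real.norm_eq_abs, abs_of_nonneg h0]
      have hvM : v * (1-α) ≤ u0 + 1 := by
        rw [hM] at hv2
        have := (lt_div_iff₀ h1α).mp hv2
        linarith
      have he : Real.exp (-x^2/(2*v)) ≤ E := by
        rw [hE]
        apply Real.exp_le_exp.mpr
        rw [div_le_div_iff₀ (by positivity) (by positivity)]
        nlinarith [mul_le_mul_of_nonneg_left hvM (sq_nonneg x)]
      have hr : v ^ (-(3:ℝ)/2) ≤ 1 :=
        Real.rpow_le_one_of_one_le_of_nonpos hL1 (by norm_num)
      have hπb : π (v-1) ≤ R^k' * L u0 := by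
        rw [hπL (v-1)]
        have hvu : u0 ≤ v - 1 := by linarith
        have hvM1 : v - 1 ≤ 2^k' * u0 := by linarith
        have hLb := (urv_iter hLpos hR hu0 hab hR1 k' (v-1) hvu hvM1).2
        have hexpb : Real.exp (-b*(v-1)) ≤ 1 := by
          rw [Real.exp_le_one_iff]; nlinarith
        have hLnn : 0 ≤ L (v-1) := (hLpos _ (by linarith)).le
        calc L (v-1) * Real.exp (-b*(v-1)) ≤ L (v-1) * 1 :=
              mul_le_mul_of_nonneg_left hexpb hLnn
          _ ≤ R^k' * L u0 := by rw [mul_one]; exact hLb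
      calc Real.exp (-x^2/(2*v)) * v ^ (-(3:ℝ)/2) * π (v-1)
          ≤ E * 1 * (R^k' * L u0) := by
            apply mul_le_mul (mul_le_mul he hr (Real.rpow_nonneg hv0.le _) hEpos.le)
              hπb hπnn (by nlinarith)
        _ = CN := by rw [hCN]; ring
    have hvol : (volume : Measure ℝ) (Ioo (u0+1) M) < ⊤ := by
      rw [Real.volume_Ioo]; exact ENNReal.ofReal_lt_top
    have hb2 := norm_setIntegral_le_of_norm_le_const_ae' (μ := (volume : Measure ℝ))
      (s := Ioo (u0+1) M) hvol hfb
    have hvol2 : ((volume : Measure ℝ) (Ioo (u0+1) M)).toReal = M - (u0+1) := by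
      rw [Real.volume_Ioo, ENNReal.toReal_ofReal hm_pos.le]
    calc (∫ v in Ioo (u0+1) M, Real.exp (-x^2/(2*v)) * v ^ (-(3:ℝ)/2) * π (v-1))
        ≤ ‖∫ v in Ioo (u0+1) M, Real.exp (-x^2/(2*v)) * v ^ (-(3:ℝ)/2) * π (v-1)‖ :=
          le_abs_self _
      _ ≤ CN * ((volume : Measure ℝ) (Ioo (u0+1) M)).toReal := hb2
      _ = CN * (M - (u0+1)) := by rw [hvol2]
  have hCNnn : 0 ≤ CN * (M - (u0+1)) :=
    mul_nonneg (mul_nonneg hEpos.le (mul_nonneg (pow_pos hR k').le hLu0.le)) hm_pos.le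
  -- denominator
  by_cases hDI : IntegrableOn
      (fun v => Real.exp (-x^2/(2*v)) * v ^ (-(1:ℝ)/2) * π (v-1)) (Ioi (1:ℝ)) volume
  swap
  · have hD0 : Dint π x = 0 := by
      simp only [Dint]; exact integral_undef hDI
    rw [hD0, div_zero]
    exact mul_nonneg (mul_nonneg hc0pos.le (Real.exp_pos _).le)
      (Real.rpow_nonneg (abs_nonneg x) _)
  · set k : ℕ := ⌈Real.logb 2 (X/u0)⌉₊ with hk
    have h2kX : X ≤ 2^k * u0 := by
      have ht : (2:ℝ) ^ Real.logb 2 (X/u0) = X/u0 :=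
        Real.rpow_logb two_pos (by norm_num) (by positivity)
      have h := two_pow_ceil_ge (t := Real.logb 2 (X/u0))
      rw [ht] at h
      rw [hk]
      exact (div_le_iff₀ hu0).mp h
    set P : ℝ := (X+1) ^ ((1:ℝ)/2) with hP
    have hPpos : 0 < P := Real.rpow_pos_of_pos (by linarith) _
    have hRkpos : (0:ℝ) < R^k := pow_pos hR k
    set DB : ℝ := Real.exp (-X/2) * P⁻¹ * (L u0 * (R^k)⁻¹ * Real.exp (-b*X)) with hDB
    have hDBpos : 0 < DB := by
      rw [hDB]
      exact mul_pos (mul_pos (Real.exp_pos _) (inv_pos.mpr hPpos))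
        (mul_pos (mul_pos hLu0 (inv_pos.mpr hRkpos)) (Real.exp_pos _))
    have hPinv : P⁻¹ = (X+1) ^ (-(1:ℝ)/2) := by
      rw [hP, ← Real.rpow_neg (by linarith : (0:ℝ) ≤ X+1)]
      norm_num
    have hgb : ∀ v ∈ Icc X (X+1),
        DB ≤ Real.exp (-x^2/(2*v)) * v ^ (-(1:ℝ)/2) * π (v-1) := by
      intro v hv
      obtain ⟨hv1, hv2⟩ := hv
      have hv0 : (0:ℝ) < v := by linarith
      have he : Real.exp (-X/2) ≤ Real.exp (-x^2/(2*v)) := by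
        apply Real.exp_le_exp.mpr
        rw [hx2, div_le_div_iff₀ (by norm_num) (by positivity)]
        nlinarith
      have hrp : P⁻¹ ≤ v ^ (-(1:ℝ)/2) := by
        rw [hPinv]
        exact Real.rpow_le_rpow_of_nonpos hv0 hv2 (by norm_num)
      have hπlb : L u0 * (R^k)⁻¹ * Real.exp (-b*X) ≤ π (v-1) := by
        rw [hπL (v-1)]
        have hvu : u0 ≤ v - 1 := by linarith
        have hv2' : v - 1 ≤ 2^k * u0 := by linarith
        have hLlb := (urv_iter hLpos hR hu0 hab hR1 k (v-1) hvu hv2').1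
        rw [div_eq_mul_inv] at hLlb
        have hexplb : Real.exp (-b*X) ≤ Real.exp (-b*(v-1)) := by
          apply Real.exp_le_exp.mpr; nlinarith
        exact mul_le_mul hLlb hexplb (Real.exp_pos _).le (hLpos _ (by linarith)).le
      rw [hDB]
      apply mul_le_mul (mul_le_mul he hrp (inv_pos.mpr hPpos).le (Real.exp_pos _).le)
        hπlb
        (mul_nonneg (mul_nonneg hLu0.le (inv_pos.mpr hRkpos).le) (Real.exp_pos _).le)
        (mul_nonneg (Real.exp_pos _).le (Real.rpow_nonneg hv0.le _))
    have hIcc : Icc X (X+1) ⊆ Ioi (1:ℝ) := by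
      intro v hv
      simp only [mem_Ioi]
      have := hv.1
      linarith
    have hvol1 : ((volume : Measure ℝ) (Icc X (X+1))).toReal = 1 := by
      rw [Real.volume_Icc]
      rw [show X + 1 - X = 1 by ring]
      simp
    have hDlow : DB ≤ Dint π x := by
      have h1 : DB * ((volume : Measure ℝ) (Icc X (X+1))).toReal
          ≤ ∫ v in Icc X (X+1), Real.exp (-x^2/(2*v)) * v ^ (-(1:ℝ)/2) * π (v-1) :=
        setIntegral_ge_of_const_le_real measurableSet_Icc
          (by rw [Real.volume_Icc]; exact ENNReal.ofReal_ne_top) hgb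
          (hDI.mono_set hIcc)
      have hnnae : 0 ≤ᵐ[(volume : Measure ℝ).restrict (Ioi 1)]
          (fun v => Real.exp (-x^2/(2*v)) * v ^ (-(1:ℝ)/2) * π (v-1)) := by
        refine (ae_restrict_iff' measurableSet_Ioi).mpr (Eventually.of_forall fun v hv => ?_)
        have hv0 : (0:ℝ) < v := lt_trans one_pos hv
        exact mul_nonneg (mul_nonneg (Real.exp_pos _).le (Real.rpow_nonneg hv0.le _)) (hπ0 _)
      have h2 : (∫ v in Icc X (X+1), Real.exp (-x^2/(2*v)) * v ^ (-(1:ℝ)/2) * π (v-1))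
          ≤ ∫ v in Ioi (1:ℝ), Real.exp (-x^2/(2*v)) * v ^ (-(1:ℝ)/2) * π (v-1) :=
        setIntegral_mono_set hDI hnnae (HasSubset.Subset.eventuallyLE hIcc)
      simp only [Dint]
      rw [hvol1, mul_one] at h1
      exact le_trans h1 h2
    -- key inequality
    have hq : (0:ℝ) < X ^ (3*β - 1/2) := Real.rpow_pos_of_pos hXpos _
    have KI : R^k' * (M - (u0+1)) * R^k * P ≤ c0 * Real.exp (X/2) * X^(3*β-1/2) := by
      have hC1le : (M - (u0+1)) * R^k' * R * (u0 ^ β)⁻¹ * 2^((1:ℝ)/2) ≤ c0 := le_max_right _ _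
      have hRk_le : R^k ≤ R * (X^β * (u0 ^ β)⁻¹) := by
        have ht0 : 0 ≤ Real.logb 2 (X/u0) :=
          Real.logb_nonneg one_lt_two (by rw [le_div_iff₀ hu0]; linarith)
        have h1 : (k:ℝ) ≤ Real.logb 2 (X/u0) + 1 := by
          rw [hk]; exact (Nat.ceil_lt_add_one ht0).le
        have h2 : R^((k:ℕ):ℝ) ≤ R^(Real.logb 2 (X/u0) + 1) :=
          Real.rpow_le_rpow_of_exponent_le hR1 h1
        rw [Real.rpow_natCast, Real.rpow_add hR, Real.rpow_one,
          rpow_logb_comm hR (by positivity), ← hβdef,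
          Real.div_rpow hXpos.le hu0.le, div_eq_mul_inv] at h2
        calc R^k ≤ X^β * (u0^β)⁻¹ * R := h2
          _ = R * (X^β * (u0^β)⁻¹) := by ring
      have hPle : P ≤ 2^((1:ℝ)/2) * X^((1:ℝ)/2) := by
        rw [hP, ← Real.mul_rpow (by norm_num) hXpos.le]
        exact Real.rpow_le_rpow (by linarith) (by linarith) (by norm_num)
      have hXq : X^β * X^((1:ℝ)/2) = X^(β + 1/2) := (Real.rpow_add hXpos _ _).symm
      have hsplit : X^(β + 1/2) = X^(1 - 2*β) * X^(3*β - 1/2) := by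
        rw [← Real.rpow_add hXpos]; ring_nf
      have hXle : X^(1-2*β) ≤ Real.exp (X/2) := by
        calc X^(1-2*β) ≤ X^(1:ℝ) :=
              Real.rpow_le_rpow_of_exponent_le (by linarith) (by linarith)
          _ = X := Real.rpow_one X
          _ ≤ Real.exp (X/2) := self_le_exp_half hXpos.le
      have hnn1 : (0:ℝ) ≤ R^k' * (M - (u0+1)) :=
        mul_nonneg (pow_pos hR k').le hm_pos.le
      have hXβnn : (0:ℝ) ≤ X^β * (u0^β)⁻¹ :=
        mul_nonneg (Real.rpow_nonneg hXpos.le _)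
          (inv_nonneg.mpr (Real.rpow_nonneg hu0.le _))
      calc R^k' * (M-(u0+1)) * R^k * P
          ≤ R^k' * (M-(u0+1)) * (R * (X^β * (u0^β)⁻¹)) * (2^((1:ℝ)/2) * X^((1:ℝ)/2)) := by
            apply mul_le_mul (mul_le_mul_of_nonneg_left hRk_le hnn1) hPle hPpos.le
            exact mul_nonneg hnn1 (mul_nonneg hR.le hXβnn)
        _ = ((M-(u0+1)) * R^k' * R * (u0^β)⁻¹ * 2^((1:ℝ)/2)) * (X^β * X^((1:ℝ)/2)) := by
            ring
        _ ≤ c0 * (X^β * X^((1:ℝ)/2)) := by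
            apply mul_le_mul_of_nonneg_right hC1le
            exact mul_nonneg (Real.rpow_nonneg hXpos.le _) (Real.rpow_nonneg hXpos.le _)
        _ = c0 * (X^(1-2*β) * X^(3*β-1/2)) := by rw [hXq, hsplit]
        _ ≤ c0 * (Real.exp (X/2) * X^(3*β-1/2)) := by
            apply mul_le_mul_of_nonneg_left
              (mul_le_mul_of_nonneg_right hXle hq.le) hc0pos.le
        _ = c0 * Real.exp (X/2) * X^(3*β-1/2) := by ring
    have hexp : Real.exp (X/2) * E
        = Real.exp (-x^2 * (1-α) / (2*(u0+1)) + X*(b+1))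
            * (Real.exp (-X/2) * Real.exp (-b*X)) := by
      rw [hE, ← Real.exp_add, ← Real.exp_add, ← Real.exp_add]
      congr 1; ring
    have key : CN * (M - (u0+1))
        ≤ (c0 * Real.exp (-x^2 * (1-α) / (2*(u0+1)) + X*(b+1)) * X^(3*β-1/2)) * DB := by
      have hQ : (0:ℝ) ≤ E * (L u0 * (R^k)⁻¹) * P⁻¹ :=
        mul_nonneg (mul_nonneg hEpos.le
          (mul_nonneg hLu0.le (inv_pos.mpr hRkpos).le)) (inv_pos.mpr hPpos).le
      have h := mul_le_mul_of_nonneg_right KI hQ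
      calc CN * (M - (u0+1))
          = (R^k' * (M-(u0+1)) * R^k * P) * (E * (L u0 * (R^k)⁻¹) * P⁻¹) := by
            rw [hCN]
            field_simp
        _ ≤ (c0 * Real.exp (X/2) * X^(3*β-1/2)) * (E * (L u0 * (R^k)⁻¹) * P⁻¹) := h
        _ = (c0 * Real.exp (-x^2 * (1-α) / (2*(u0+1)) + X*(b+1)) * X^(3*β-1/2)) * DB := by
            rw [hDB]
            linear_combination (c0 * X^(3*β-1/2) * (L u0 * (R^k)⁻¹) * P⁻¹) * hexp
    calc (∫ v in Ioo (u0+1) M, Real.exp (-x^2/(2*v)) * v ^ (-(3:ℝ)/2) * π (v-1)) / Dint π x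
        ≤ (CN * (M - (u0+1))) / DB := div_le_div₀ hCNnn hnum hDBpos hDlow
      _ ≤ c0 * Real.exp (-x^2 * (1-α) / (2*(u0+1)) + X*(b+1)) * X^(3*β-1/2) := by
          rw [div_le_iff₀ hDBpos]; exact key

end
end
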